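/- Let (A, α) and (B, β) be Δ-algebras and h : A → B a Δ-algebra morphism. Then for any Δ-set D ⊆ A, the image h(D) is a Δ-set in B, and h(⋁D) = ⋁ h(D). In other words, morphisms of Δ-algebras automatically preserve suprema of Δ-sets. -/

import Mathlib

/-- A ranked alphabet (signature): a set of symbols with arities. -/
structure Signature where
  symb : Type
  ar : symb → ℕ

/-- A partial Σ-coterm over `X`: a finite or infinite partial Σ-labeled tree
whose internal nodes are labeled by operation symbols (with children indexed by
the arity, some possibly missing) and whose leaves may be labeled by variables
from `X`.  It is represented by its (partial) labeling function on tree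
positions. -/
structure Coterm (σ : Signature) (X : Type*) where
  label : List ℕ → Option (σ.symb ⊕ X)
  consistent : ∀ p i, (label (p ++ [i])).isSome →
    ∃ f, label p = some (Sum.inl f) ∧ i < σ.ar f

namespace Coterm

variable {σ : Signature} {X Y : Type*}

theorem ext' {s t : Coterm σ X} (h : s.label = t.label) : s = t := by
  cases s; cases t; cases h; rfl

/-- The approximation order: `s ≤ t` iff `s` is obtained from `t` by deleting
subterms, i.e. `s` agrees with `t` wherever `s` is defined. -/
instance : PartialOrder (Coterm σ X) where
  le s t := ∀ p v, s.label p = some v → t.label p = some v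
  le_refl s := fun _ _ h => h
  le_trans s t u h₁ h₂ := fun p v h => h₂ p v (h₁ p v h)
  le_antisymm s t h₁ h₂ := by
    apply ext'; funext p
    cases hs : s.label p with
    | some v => exact (h₁ p v hs).symm
    | none =>
      cases ht : t.label p with
      | some v => exact absurd (h₂ p v ht) (by rw [hs]; simp)
      | none => rfl

/-- The empty term `⊥`. -/
instance : OrderBot (Coterm σ X) where
  bot := ⟨fun _ => none, by intro p i h; simp at h⟩
  bot_le t := by intro p v h; simp only at h; exact absurd h (by simp)

@[simp] theorem bot_label (p : List ℕ) : (⊥ : Coterm σ X).label p = none := rfl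

/-- The coterm consisting of a single variable. -/
def var (x : X) : Coterm σ X where
  label p := if p = [] then some (Sum.inr x) else none
  consistent := by
    intro p i h
    try simp only at h
    rw [if_neg (by simp)] at h
    simp at h

/-- The labeling function of `node f ts`. -/
def nodeLabel (f : σ.symb) (ts : Fin (σ.ar f) → Coterm σ X) :
    List ℕ → Option (σ.symb ⊕ X)
  | [] => some (Sum.inl f)
  | i :: q => if h : i < σ.ar f then (ts ⟨i, h⟩).label q else none

/-- The Σ-operations on coterms: `node f ts` is the tree with root label `f`
and children `ts`. -/
def node (f : σ.symb) (ts : Fin (σ.ar f) → Coterm σ X) : Coterm σ X where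
  label := nodeLabel f ts
  consistent := by
    intro p i hp
    cases p with
    | nil =>
      refine ⟨f, rfl, ?_⟩
      simp only [List.nil_append, nodeLabel] at hp
      by_contra hlt
      rw [dif_neg hlt] at hp
      simp at hp
    | cons j q =>
      simp only [List.cons_append, nodeLabel] at hp
      by_cases hj : j < σ.ar f
      · rw [dif_pos hj] at hp
        obtain ⟨g, hg, hi⟩ := (ts ⟨j, hj⟩).consistent q i hp
        exact ⟨g, by simp only [nodeLabel, dif_pos hj]; exact hg, hi⟩
      · rw [dif_neg hj] at hp
        simp at hp

/-- A coterm is finite if it has finitely many positions;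
`FT(X)` is the set of finite partial terms. -/
def IsFinite (t : Coterm σ X) : Prop := {p : List ℕ | (t.label p).isSome}.Finite

/-- `s ≪ t`: `s` is finite and is obtained from `t` by deleting subterms. -/
def Ll (s t : Coterm σ X) : Prop := s.IsFinite ∧ s ≤ t

/-- Relabeling of variables along a map `h : X → Y`; this is the unique
ω-continuous algebra morphism `CT(X) → CT(Y)` extending `x ↦ h x` (viewing
variables of `Y` as coterms), and also gives the functorial action of the
coterm monad. -/
def rename (h : X → Y) (t : Coterm σ X) : Coterm σ Y where
  label p := (t.label p).map (Sum.map id h)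
  consistent := by
    intro p i hp
    try simp only at hp ⊢
    rw [Option.isSome_map] at hp
    obtain ⟨f, hf, hi⟩ := t.consistent p i hp
    exact ⟨f, by rw [hf]; rfl, hi⟩

end Coterm

/-- `g : CT(X) → CT(Y)` is a morphism of ω-continuous algebras: strict,
monotone, commuting with the Σ-operations, and preserving suprema of countable
directed sets. -/
structure IsOmegaContMorphism {σ : Signature} {X Y : Type*}
    (g : Coterm σ X → Coterm σ Y) : Prop where
  monotone : Monotone g
  strict : g ⊥ = ⊥
  ops : ∀ (f : σ.symb) (ts : Fin (σ.ar f) → Coterm σ X),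
    g (Coterm.node f ts) = Coterm.node f (fun i => g (ts i))
  cont : ∀ S : Set (Coterm σ X), S.Countable → S.Nonempty →
    DirectedOn (· ≤ ·) S → ∀ t, IsLUB S t → IsLUB (g '' S) (g t)

/-- A quasi-regular family: an assignment to each set `X` of an ordered
subalgebra `ΔX` of `CT(X)` containing the variables, such that for every
ω-continuous morphism `h : CT(X) → CT(Y)` with `h(X) ⊆ ΔY` one has
`h(ΔX) ⊆ ΔY`. -/
structure QuasiRegular (σ : Signature) where
  Del : (X : Type) → Set (Coterm σ X)
  bot_mem : ∀ X : Type, (⊥ : Coterm σ X) ∈ Del X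
  var_mem : ∀ (X : Type) (x : X), Coterm.var x ∈ Del X
  op_closed : ∀ (X : Type) (f : σ.symb) (ts : Fin (σ.ar f) → Coterm σ X),
    (∀ i, ts i ∈ Del X) → Coterm.node f ts ∈ Del X
  stable : ∀ (X Y : Type) (g : Coterm σ X → Coterm σ Y),
    IsOmegaContMorphism g → (∀ x : X, g (Coterm.var x) ∈ Del Y) →
    ∀ t ∈ Del X, g t ∈ Del Y

/-- An ordered Σ-algebra structure on a pointed poset `A`. -/
structure OrderedAlg (σ : Signature) (A : Type*) [PartialOrder A] [OrderBot A] where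
  op : ∀ f : σ.symb, (Fin (σ.ar f) → A) → A
  mono : ∀ f (a b : Fin (σ.ar f) → A), (∀ i, a i ≤ b i) → op f a ≤ op f b

/-- `S` is an ω-ideal relative to the ambient set `U`. -/
def IsOmegaIdealIn {α : Type*} [Preorder α] (U : Set α) (S : Set α) : Prop :=
  S ⊆ U ∧ ∃ C : Set α, C ⊆ S ∧ C.Countable ∧ C.Nonempty ∧ DirectedOn (· ≤ ·) C ∧
    S = {x ∈ U | ∃ c ∈ C, x ≤ c}

/-- `S` is an ω-ideal: the down-closure of a countable directed set. -/
def IsOmegaIdeal {α : Type*} [Preorder α] (S : Set α) : Prop :=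
  IsOmegaIdealIn Set.univ S

/-- `β : FT(A) → A` interprets finite partial terms over `A` in the ordered
algebra `(A, alg)`: it is the structure map of `A` as an Eilenberg–Moore
algebra for the finite partial term monad.  (The value of `β` on non-finite
coterms is irrelevant.) -/
def IsFinInterp {σ : Signature} {A : Type*} [PartialOrder A] [OrderBot A]
    (alg : OrderedAlg σ A) (β : Coterm σ A → A) : Prop :=
  (β ⊥ = ⊥) ∧
  (∀ a : A, β (Coterm.var a) = a) ∧
  (∀ (f : σ.symb) (ts : Fin (σ.ar f) → Coterm σ A), (∀ i, (ts i).IsFinite) →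
    β (Coterm.node f ts) = alg.op f (fun i => β (ts i))) ∧
  (∀ s s' : Coterm σ A, s.IsFinite → s'.IsFinite → s ≤ s' → β s ≤ β s')

/-- A Δ-set in `A` (w.r.t. the interpretation `β`): the set of values of the
finite approximants of some term `t ∈ ΔA`. -/
def IsDelSet {σ : Signature} (Q : QuasiRegular σ) {A : Type} [PartialOrder A]
    [OrderBot A] (β : Coterm σ A → A) (D : Set A) : Prop :=
  ∃ t ∈ Q.Del A, D = {x : A | ∃ s, Coterm.Ll s t ∧ x = β s}

/-- `A` is a Δ-regular algebra with (extended) structure map `β : ΔA → A`: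
`β` interprets finite terms, the supremum of each Δ-set
`{β(s) : s ≪ t}` (for `t ∈ ΔA`) exists and equals `β(t)`
(this is the extension `β(t) = ⋁{β(s) : s ≪ t}`), and the algebraic
operations preserve suprema of Δ-sets. -/
def IsDelStructure {σ : Signature} (Q : QuasiRegular σ) {A : Type}
    [PartialOrder A] [OrderBot A] (alg : OrderedAlg σ A)
    (β : Coterm σ A → A) : Prop :=
  IsFinInterp alg β ∧
  (∀ t ∈ Q.Del A, IsLUB {x : A | ∃ s, Coterm.Ll s t ∧ x = β s} (β t)) ∧
  (∀ (f : σ.symb) (as : Fin (σ.ar f) → A) (i : Fin (σ.ar f)),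
    ∀ t ∈ Q.Del A,
      IsLUB {x : A | ∃ s, Coterm.Ll s t ∧
          x = alg.op f (Function.update as i (β s))}
        (alg.op f (Function.update as i (β t))))

/-- The multiplication (substitution/flattening) of the coterm monad,
characterized as the unique ω-continuous morphism `CT(CT X) → CT X` sending
each variable `s ∈ CT X` to `s` itself. -/
def IsFlatten {σ : Signature} {X : Type*}
    (flat : Coterm σ (Coterm σ X) → Coterm σ X) : Prop :=
  IsOmegaContMorphism flat ∧ ∀ s : Coterm σ X, flat (Coterm.var s) = s

section Aux

namespace Coterm

variable {σ : Signature} {X Y : Type*}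

theorem le_iff {s t : Coterm σ X} :
    s ≤ t ↔ ∀ p v, s.label p = some v → t.label p = some v := Iff.rfl

theorem isSome_prefix (t : Coterm σ X) (p q : List ℕ)
    (h : (t.label (p ++ q)).isSome) : (t.label p).isSome := by
  induction q using List.reverseRecOn with
  | nil => simpa using h
  | append_singleton q i ih =>
    rw [← List.append_assoc] at h
    obtain ⟨f, hf, _⟩ := t.consistent (p ++ q) i h
    exact ih (by simp [hf])

theorem eq_bot_of_label_nil (t : Coterm σ X) (h : t.label [] = none) : t = ⊥ := by
  apply ext'; funext p
  show t.label p = none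
  cases hp : t.label p with
  | none => rfl
  | some v =>
    have h1 : (t.label ([] ++ p)).isSome := by simpa using congrArg Option.isSome hp
    have := t.isSome_prefix [] p h1
    rw [h] at this; simp at this

theorem eq_var_of_label_nil (t : Coterm σ X) (x : X)
    (h : t.label [] = some (Sum.inr x)) : t = var x := by
  apply ext'; funext p
  cases p with
  | nil => simpa [var]
  | cons i q =>
    simp only [var]
    rw [if_neg (show ¬(i :: q : List ℕ) = [] by simp)]
    cases hp : t.label (i :: q) with
    | none => rfl
    | some v =>
      have h1 : (t.label (([] ++ [i]) ++ q)).isSome := by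
        simpa using congrArg Option.isSome hp
      have h2 := t.isSome_prefix ([] ++ [i]) q h1
      obtain ⟨f, hf, _⟩ := t.consistent [] i (by simpa using h2)
      rw [h] at hf; simp at hf

/-- The `i`-th immediate subterm of a coterm. -/
def child (t : Coterm σ X) (i : ℕ) : Coterm σ X where
  label q := t.label (i :: q)
  consistent p j hp := t.consistent (i :: p) j (by simpa using hp)

theorem eq_node (t : Coterm σ X) (f : σ.symb)
    (h : t.label [] = some (Sum.inl f)) :
    t = node f (fun i => t.child (i : ℕ)) := by
  apply ext'; funext p
  cases p with
  | nil => simpa [node, nodeLabel]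
  | cons i q =>
    show t.label (i :: q) = nodeLabel f (fun j => t.child (j : ℕ)) (i :: q)
    simp only [nodeLabel]
    by_cases hi : i < σ.ar f
    · rw [dif_pos hi]; rfl
    · rw [dif_neg hi]
      cases hp : t.label (i :: q) with
      | none => rfl
      | some v =>
        have h1 : (t.label (([] ++ [i]) ++ q)).isSome := by
          simpa using congrArg Option.isSome hp
        have h2 := t.isSome_prefix ([] ++ [i]) q h1
        obtain ⟨g, hg, hlt⟩ := t.consistent [] i (by simpa using h2)
        rw [h] at hg
        obtain rfl : f = g := by simpa using hg
        exact absurd hlt hi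

theorem child_isFinite {t : Coterm σ X} (ht : t.IsFinite) (i : ℕ) :
    (t.child i).IsFinite := by
  have : ((fun q : List ℕ => i :: q) ⁻¹' {p | (t.label p).isSome}).Finite :=
    ht.preimage (fun a _ b _ hab => by simpa using hab)
  exact this

theorem child_ncard_lt {t : Coterm σ X} (ht : t.IsFinite) (i : ℕ)
    (h0 : (t.label []).isSome) :
    {q : List ℕ | ((t.child i).label q).isSome}.ncard
      < {p : List ℕ | (t.label p).isSome}.ncard := by
  set C := {q : List ℕ | ((t.child i).label q).isSome} with hC
  set P := {p : List ℕ | (t.label p).isSome} with hP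
  have hCfin : C.Finite := child_isFinite ht i
  have hinj : Function.Injective (fun q : List ℕ => i :: q) :=
    fun a b hab => by simpa using hab
  have himg : (fun q : List ℕ => i :: q) '' C ⊆ P \ {[]} := by
    rintro _ ⟨q, hq, rfl⟩
    exact ⟨hq, by simp⟩
  calc C.ncard = ((fun q : List ℕ => i :: q) '' C).ncard :=
        (Set.ncard_image_of_injective C hinj).symm
    _ ≤ (P \ {[]}).ncard := Set.ncard_le_ncard himg ht.diff
    _ < P.ncard := Set.ncard_lt_ncard (by
        constructor
        · exact Set.diff_subset
        · intro hsub
          have : ([] : List ℕ) ∈ P \ {([] : List ℕ)} := hsub h0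
          simp at this) ht

@[simp] theorem rename_label (h : X → Y) (t : Coterm σ X) (p : List ℕ) :
    (rename h t).label p = (t.label p).map (Sum.map id h) := rfl

theorem rename_mono (h : X → Y) : Monotone (rename (σ := σ) h) := by
  intro s t hst p v hv
  rw [rename_label] at hv ⊢
  obtain ⟨w, hw, rfl⟩ := Option.map_eq_some_iff.mp hv
  rw [hst p w hw]; rfl

theorem rename_bot (h : X → Y) : rename (σ := σ) h ⊥ = ⊥ :=
  ext' (funext fun _ => rfl)

theorem rename_var (h : X → Y) (x : X) :
    rename (σ := σ) h (var x) = var (h x) := by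
  apply ext'; funext p
  show ((if p = [] then some (Sum.inr x) else none).map (Sum.map id h))
      = (if p = [] then some (Sum.inr (h x)) else none)
  split <;> rfl

theorem rename_node (h : X → Y) (f : σ.symb) (ts : Fin (σ.ar f) → Coterm σ X) :
    rename h (node f ts) = node f (fun i => rename h (ts i)) := by
  apply ext'; funext p
  show (nodeLabel f ts p).map (Sum.map id h) = nodeLabel f (fun i => rename h (ts i)) p
  cases p with
  | nil => rfl
  | cons i q =>
    simp only [nodeLabel]
    split <;> rfl

theorem rename_isFinite (h : X → Y) {t : Coterm σ X} (ht : t.IsFinite) :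
    (rename h t).IsFinite := by
  have : {p : List ℕ | ((rename h t).label p).isSome}
      = {p | (t.label p).isSome} := by
    ext p; simp [rename_label, Option.isSome_map]
  rw [Coterm.IsFinite, this]; exact ht

theorem directed_label_uniq {S : Set (Coterm σ X)} (hdir : DirectedOn (· ≤ ·) S)
    {p : List ℕ} {v w : σ.symb ⊕ X} (hv : ∃ s ∈ S, s.label p = some v)
    (hw : ∃ s ∈ S, s.label p = some w) : v = w := by
  obtain ⟨s1, hs1, e1⟩ := hv
  obtain ⟨s2, hs2, e2⟩ := hw
  obtain ⟨u, _, l1, l2⟩ := hdir s1 hs1 s2 hs2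
  have h1 := le_iff.mp l1 p v e1
  have h2 := le_iff.mp l2 p w e2
  rw [h1] at h2; exact Option.some.inj h2

open Classical in
noncomputable def unionCoterm (S : Set (Coterm σ X))
    (hdir : DirectedOn (· ≤ ·) S) : Coterm σ X where
  label p := if h : ∃ v, ∃ s ∈ S, s.label p = some v then some h.choose else none
  consistent p i hp := by
    classical
    split at hp
    case isFalse => simp at hp
    case isTrue hex =>
      obtain ⟨s, hs, hsl⟩ := hex.choose_spec
      obtain ⟨f, hf, hlt⟩ := s.consistent p i (by simp [hsl])
      have hex2 : ∃ v, ∃ s ∈ S, s.label p = some v := ⟨Sum.inl f, s, hs, hf⟩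
      refine ⟨f, ?_, hlt⟩
      rw [dif_pos hex2]
      exact congrArg some (directed_label_uniq hdir hex2.choose_spec ⟨s, hs, hf⟩)

theorem unionCoterm_label {S : Set (Coterm σ X)} (hdir : DirectedOn (· ≤ ·) S)
    (p : List ℕ) (v : σ.symb ⊕ X) :
    (unionCoterm S hdir).label p = some v ↔ ∃ s ∈ S, s.label p = some v := by
  constructor
  · intro hv
    simp only [unionCoterm] at hv
    split at hv
    case isFalse => simp at hv
    case isTrue hex =>
      obtain rfl := Option.some.inj hv
      exact hex.choose_spec
  · intro hv
    have hex : ∃ w, ∃ s ∈ S, s.label p = some w := ⟨v, hv⟩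
    simp only [unionCoterm]
    rw [dif_pos hex]
    exact congrArg some (directed_label_uniq hdir hex.choose_spec hv)

theorem isLUB_unionCoterm {S : Set (Coterm σ X)} (hdir : DirectedOn (· ≤ ·) S) :
    IsLUB S (unionCoterm S hdir) := by
  constructor
  · intro s hs
    rw [le_iff]
    intro p v hv
    exact (unionCoterm_label hdir p v).mpr ⟨s, hs, hv⟩
  · intro u hu
    rw [le_iff]
    intro p v hv
    obtain ⟨s, hs, hsl⟩ := (unionCoterm_label hdir p v).mp hv
    exact le_iff.mp (hu hs) p v hsl

theorem label_of_isLUB {S : Set (Coterm σ X)} (hdir : DirectedOn (· ≤ ·) S)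
    {t : Coterm σ X} (ht : IsLUB S t) (p : List ℕ) (v : σ.symb ⊕ X) :
    t.label p = some v ↔ ∃ s ∈ S, s.label p = some v := by
  have := ht.unique (isLUB_unionCoterm hdir)
  rw [this]; exact unionCoterm_label hdir p v

theorem rename_isOmegaContMorphism (h : X → Y) :
    IsOmegaContMorphism (rename (σ := σ) h) := by
  refine ⟨rename_mono h, rename_bot h, rename_node h, ?_⟩
  intro S _ _ hdir t ht
  constructor
  · rintro _ ⟨s, hs, rfl⟩
    exact rename_mono h (ht.1 hs)
  · intro u hu
    rw [le_iff]
    intro p v hv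
    rw [rename_label] at hv
    obtain ⟨w, hw, rfl⟩ := Option.map_eq_some_iff.mp hv
    obtain ⟨s, hs, hsl⟩ := (label_of_isLUB hdir ht p w).mp hw
    refine le_iff.mp (hu ⟨s, hs, rfl⟩) p _ ?_
    rw [rename_label, hsl]; rfl

end Coterm

theorem finite_mem_del {σ : Signature} (Q : QuasiRegular σ) (A : Type) :
    ∀ s : Coterm σ A, s.IsFinite → s ∈ Q.Del A := by
  suffices H : ∀ n, ∀ s : Coterm σ A, s.IsFinite →
      {p | (s.label p).isSome}.ncard = n → s ∈ Q.Del A by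
    intro s hs; exact H _ s hs rfl
  intro n
  induction n using Nat.strong_induction_on with
  | _ n ih =>
    intro s hs hn
    cases h0 : s.label [] with
    | none =>
      rw [Coterm.eq_bot_of_label_nil s h0]; exact Q.bot_mem A
    | some v =>
      cases v with
      | inr x => rw [Coterm.eq_var_of_label_nil s x h0]; exact Q.var_mem A x
      | inl f =>
        rw [Coterm.eq_node s f h0]
        refine Q.op_closed A f _ (fun i => ?_)
        subst hn
        exact ih _ (Coterm.child_ncard_lt hs (i : ℕ) (by simp [h0])) _
          (Coterm.child_isFinite hs (i : ℕ)) rfl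

end Aux

/-- Let `(A, α)` and `(B, β)` be Δ-algebras and `h : A → B`
a Δ-algebra morphism (a strict monotone map commuting with the structure
maps).  Then the image of any Δ-set `D ⊆ A` is a Δ-set in `B`, and
`h(⋁D) = ⋁h(D)`: morphisms of Δ-algebras automatically preserve suprema of
Δ-sets. -/
theorem stmt_12 (σ : Signature) (Q : QuasiRegular σ) (A B : Type)
    [PartialOrder A] [OrderBot A] [PartialOrder B] [OrderBot B]
    (algA : OrderedAlg σ A) (algB : OrderedAlg σ B)
    (α : Coterm σ A → A) (hα : IsDelStructure Q algA α)
    (β : Coterm σ B → B) (hβ : IsDelStructure Q algB β)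
    (h : A → B) (hbot : h ⊥ = ⊥) (hmono : Monotone h)
    (hcomm : ∀ t ∈ Q.Del A, h (α t) = β (Coterm.rename h t)) :
    ∀ t ∈ Q.Del A,
      IsDelSet Q β (h '' {x : A | ∃ s, Coterm.Ll s t ∧ x = α s}) ∧
      IsLUB (h '' {x : A | ∃ s, Coterm.Ll s t ∧ x = α s}) (h (α t)) := by
  intro t ht
  have ht' : Coterm.rename h t ∈ Q.Del B :=
    Q.stable A B _ (Coterm.rename_isOmegaContMorphism h)
      (fun x => by rw [Coterm.rename_var]; exact Q.var_mem B (h x)) t ht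
  have hsets : h '' {x : A | ∃ s, Coterm.Ll s t ∧ x = α s}
      = {x : B | ∃ s', Coterm.Ll s' (Coterm.rename h t) ∧ x = β s'} := by
    ext x; constructor
    · rintro ⟨y, ⟨s, ⟨hfin, hle⟩, rfl⟩, rfl⟩
      refine ⟨Coterm.rename h s,
        ⟨Coterm.rename_isFinite h hfin, Coterm.rename_mono h hle⟩, ?_⟩
      exact hcomm s (finite_mem_del Q A s hfin)
    · rintro ⟨s', ⟨hfin', hle'⟩, rfl⟩
      -- restrict `t` to the positions where `s'` is defined
      set s : Coterm σ A :=
        { label := fun p => if (s'.label p).isSome then t.label p else none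
          consistent := by
            intro p i hp
            split at hp
            case isFalse => simp at hp
            case isTrue hsome =>
              obtain ⟨v', hv'⟩ := Option.isSome_iff_exists.mp hsome
              obtain ⟨f', hf', hlt⟩ := s'.consistent p i (by simp [hv'])
              have := Coterm.le_iff.mp hle' p _ hf'
              rw [Coterm.rename_label] at this
              obtain ⟨w, hw, hmap⟩ := Option.map_eq_some_iff.mp this
              cases w with
              | inr a => simp [Sum.map] at hmap
              | inl g =>
                obtain rfl : f' = g := by simpa [Sum.map] using hmap.symm
                refine ⟨f', ?_, hlt⟩
                rw [if_pos (by simp [hf']), hw] } with hsdef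
      have hsfin : s.IsFinite := by
        refine Set.Finite.subset hfin' ?_
        intro p hp
        simp only [hsdef, Set.mem_setOf_eq] at hp ⊢
        split at hp
        · assumption
        · simp at hp
      have hslet : s ≤ t := by
        rw [Coterm.le_iff]
        intro p v hv
        simp only [hsdef] at hv
        split at hv
        · exact hv
        · simp at hv
      have hrs : Coterm.rename h s = s' := by
        apply Coterm.ext'; funext p
        rw [Coterm.rename_label]
        cases hp : s'.label p with
        | none =>
          have : s.label p = none := by simp [hsdef, hp]
          rw [this]; rfl
        | some v =>
          have h1 := Coterm.le_iff.mp hle' p v hp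
          rw [Coterm.rename_label] at h1
          have : s.label p = t.label p := by simp [hsdef, hp]
          rw [this, h1]
      refine ⟨α s, ⟨s, ⟨hsfin, hslet⟩, rfl⟩, ?_⟩
      rw [hcomm s (finite_mem_del Q A s hsfin), hrs]
  refine ⟨⟨Coterm.rename h t, ht', hsets⟩, ?_⟩
  rw [hsets, hcomm t ht]
  exact hβ.2.1 _ ht'
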